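/- Let f be a homeomorphism of a compact metrizable space X such that the induced Z-action is R-closed (i.e., R = {(x,y) : y ∈ closure of the f-orbit of x} is closed). Then f is pointwise almost periodic: for every x ∈ X and every open neighborhood U of x, the set N(x,U) = {n ∈ Z : f^n(x) ∈ U} is syndetic in Z, i.e., there is K ≥ 0 such that every interval of K+1 consecutive integers meets N(x,U). -/

import Mathlib

open Topology Filter Set

/-- The ℤ-orbit of a point under a bijection. -/
def orbitE {X : Type*} (e : Equiv.Perm X) (x : X) : Set X :=
  Set.range fun n : ℤ => (e ^ n) x

/-- A homeomorphism is R-closed if the orbit-closure relation is closed. -/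
def RClosed {X : Type*} [TopologicalSpace X] (f : X ≃ₜ X) : Prop :=
  IsClosed {p : X × X | p.2 ∈ closure (orbitE f.toEquiv p.1)}

/-- A set of integers is syndetic. -/
def IsSyndetic (S : Set ℤ) : Prop :=
  ∃ K : ℕ, ∀ n : ℤ, ∃ m ∈ S, n ≤ m ∧ m ≤ n + K

/-- A point is almost periodic for a bijection of a topological space. -/
def AlmostPeriodicPt {X : Type*} [TopologicalSpace X] (e : Equiv.Perm X) (x : X) : Prop :=
  ∀ U : Set X, IsOpen U → x ∈ U → IsSyndetic {n : ℤ | (e ^ n) x ∈ U}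

lemma cont_zpow {X : Type*} [TopologicalSpace X] (f : X ≃ₜ X) (n : ℤ) :
    Continuous fun y => (f.toEquiv ^ n) y := by
  induction n using Int.induction_on with
  | zero => simpa using continuous_id'
  | succ k ih =>
      have : ∀ y, (f.toEquiv ^ ((k:ℤ)+1)) y = (f.toEquiv ^ (k:ℤ)) (f y) := by
        intro y; rw [zpow_add, zpow_one]; rfl
      simp only [this]; exact ih.comp f.continuous
  | pred k ih =>
      have : ∀ y, (f.toEquiv ^ (-(k:ℤ)-1)) y = (f.toEquiv ^ (-(k:ℤ))) (f.symm y) := by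
        intro y; rw [sub_eq_add_neg, zpow_add, zpow_neg_one]; rfl
      simp only [this]; exact ih.comp f.symm.continuous

lemma apply_mem_orbitE {X : Type*} (e : Equiv.Perm X) (x : X) (n : ℤ) :
    (e ^ n) x ∈ orbitE e x := ⟨n, rfl⟩

lemma orbitE_apply {X : Type*} (e : Equiv.Perm X) (x : X) (n m : ℤ) :
    (e ^ m) ((e ^ n) x) = (e ^ (m + n)) x := by
  rw [zpow_add]; rfl

theorem stmt_4 {X : Type*} [TopologicalSpace X] [CompactSpace X]
    [TopologicalSpace.MetrizableSpace X] (f : X ≃ₜ X) (hf : RClosed f) :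
    ∀ x : X, ∀ U : Set X, IsOpen U → x ∈ U →
      IsSyndetic {n : ℤ | (f.toEquiv ^ n) x ∈ U} := by
  intro x U hU hxU
  set e := f.toEquiv with he
  -- Step 1: for y in the orbit closure of x, x is in the orbit closure of y.
  have key : ∀ y ∈ closure (orbitE e x), x ∈ closure (orbitE e y) := by
    intro y hy
    have hsub : orbitE e x ×ˢ ({x} : Set X) ⊆ {p : X × X | p.2 ∈ closure (orbitE e p.1)} := by
      rintro ⟨z, w⟩ ⟨⟨n, rfl⟩, hw⟩
      simp only [mem_singleton_iff] at hw
      subst hw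
      apply subset_closure
      refine ⟨-n, ?_⟩
      show (e ^ (-n)) ((e ^ n) _) = _
      rw [orbitE_apply, neg_add_cancel, zpow_zero]; rfl
    have hcl : (y, x) ∈ closure (orbitE e x ×ˢ ({x} : Set X)) := by
      rw [closure_prod_eq]
      exact ⟨hy, subset_closure rfl⟩
    have := (closure_minimal hsub hf) hcl
    exact this
  -- Step 2: compactness covering
  set M := closure (orbitE e x) with hM
  have hMc : IsCompact M := isClosed_closure.isCompact
  have hcover : M ⊆ ⋃ n : ℤ, (fun y => (e ^ n) y) ⁻¹' U := by
    intro y hy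
    have hx := key y hy
    rcases mem_closure_iff.mp hx U hU hxU with ⟨z, hzU, ⟨n, rfl⟩⟩
    exact mem_iUnion.mpr ⟨n, hzU⟩
  obtain ⟨t, ht⟩ := hMc.elim_finite_subcover (fun n : ℤ => (fun y => (e ^ n) y) ⁻¹' U)
    (fun n => hU.preimage (cont_zpow f n)) hcover
  have hxM : x ∈ M := subset_closure ⟨0, by simp⟩
  have htne : t.Nonempty := by
    rcases mem_iUnion₂.mp (ht hxM) with ⟨i, hi, _⟩
    exact ⟨i, hi⟩
  set a := t.min' htne
  set b := t.max' htne
  have hab : a ≤ b := t.min'_le b (t.max'_mem htne)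
  refine ⟨(b - a).toNat, fun n => ?_⟩
  have hyM : (e ^ (n - a)) x ∈ M := subset_closure (apply_mem_orbitE e x _)
  rcases mem_iUnion₂.mp (ht hyM) with ⟨i, hit, hiU⟩
  refine ⟨i + (n - a), ?_, ?_, ?_⟩
  · show (e ^ (i + (n - a))) x ∈ U
    rw [← orbitE_apply]; exact hiU
  · have := t.min'_le i hit
    omega
  · have h1 := t.le_max' i hit
    have h2 : ((b - a).toNat : ℤ) = b - a := Int.toNat_of_nonneg (by omega)
    omega
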